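/- For every integer n ≥ 0, m_{2n}(√2) = P_{2n+2} / ((2n+2)(2n+1)), where P_m denotes the m-th Pell number. -/

import Mathlib

open MeasureTheory ProbabilityTheory Finset
open scoped ENNReal

/-- The Pell numbers `P_m = ((1+√2)^m - (1-√2)^m)/(2√2)` (as real numbers). -/
noncomputable def Pell (k : ℕ) : ℝ :=
  ((1 + Real.sqrt 2) ^ k - (1 - Real.sqrt 2) ^ k) / (2 * Real.sqrt 2)

section AuxAlgebra
open Nat

noncomputable def paux (k : ℕ) : ℝ :=
  Pell (2 * k + 2) / ((2 * (k : ℝ) + 2) * (2 * (k : ℝ) + 1))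

lemma sum_even (M : ℕ) (f : ℕ → ℝ) (hf : ∀ j, Odd j → f j = 0) :
    ∑ j ∈ range (2 * M + 1), f j = ∑ i ∈ range (M + 1), f (2 * i) := by
  induction M with
  | zero => simp
  | succ m ih =>
    have h1 : 2 * (m + 1) + 1 = (2 * m + 1) + 1 + 1 := by ring
    rw [h1, Finset.sum_range_succ, Finset.sum_range_succ, ih,
      hf (2 * m + 1) ⟨m, by ring⟩, Finset.sum_range_succ, Finset.sum_range_succ]
    have : 2 * (m + 1) = 2 * m + 2 := by ring
    rw [this, Finset.sum_range_succ]; ring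

lemma ebinom (m : ℕ) (x : ℝ) :
    ∑ i ∈ range (m + 1), ((2 * m).choose (2 * i) : ℝ) * x ^ (2 * (m - i)) =
      ((x + 1) ^ (2 * m) + (x - 1) ^ (2 * m)) / 2 := by
  have key : ((x + 1) ^ (2 * m) + (x - 1) ^ (2 * m)) / 2 =
      ∑ j ∈ range (2 * m + 1), (if Even j then ((2 * m).choose j : ℝ) * x ^ j else 0) := by
    rw [add_pow, sub_eq_add_neg x 1, add_pow]
    rw [← Finset.sum_add_distrib, Finset.sum_div]
    refine Finset.sum_congr rfl fun j hj => ?_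
    have hj' : j ≤ 2 * m := Nat.lt_succ_iff.mp (Finset.mem_range.mp hj)
    rcases Nat.even_or_odd j with he | ho
    · have : Even (2 * m - j) := by
        rcases he with ⟨a, rfl⟩
        exact ⟨m - a, by omega⟩
      rw [if_pos he, this.neg_one_pow]
      ring
    · have : ¬ Even j := Nat.not_even_iff_odd.mpr ho
      have hodd : Odd (2 * m - j) := by
        rcases ho with ⟨a, rfl⟩
        exact ⟨m - a - 1, by omega⟩
      rw [if_neg this, hodd.neg_one_pow]
      ring
  rw [key, sum_even _ _ (fun j hj => by simp [Nat.not_even_iff_odd.mpr hj])]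
  have : ∀ i ∈ range (m + 1), (if Even (2 * i) then ((2 * m).choose (2 * i) : ℝ) * x ^ (2 * i) else 0)
      = ((2 * m).choose (2 * i) : ℝ) * x ^ (2 * i) := fun i _ => if_pos ⟨i, two_mul i⟩
  rw [Finset.sum_congr rfl this,
    ← Finset.sum_range_reflect (fun i => ((2 * m).choose (2 * i) : ℝ) * x ^ (2 * i)) (m + 1)]
  refine Finset.sum_congr rfl fun i hi => ?_
  have hi' : i ≤ m := Nat.lt_succ_iff.mp (Finset.mem_range.mp hi)
  have h3 : m + 1 - 1 - i = m - i := by omega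
  have h2 : 2 * (m - i) = 2 * m - 2 * i := by omega
  simp only [h3, h2, Nat.choose_symm (by omega : 2 * i ≤ 2 * m)]

lemma nat_id (M k : ℕ) (hk : k ≤ M) :
    M.choose k * ((M + 2) * (M + 1)) = (M + 2).choose k * ((M - k + 2) * (M - k + 1)) := by
  have pos : 0 < k ! * (M - k)! := Nat.mul_pos (Nat.factorial_pos _) (Nat.factorial_pos _)
  apply Nat.eq_of_mul_eq_mul_right pos
  have e1 := Nat.choose_mul_factorial_mul_factorial hk
  have e2 := Nat.choose_mul_factorial_mul_factorial (show k ≤ M + 2 by omega)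
  have h3 : M + 2 - k = M - k + 2 := by omega
  have h4 : (M - k + 2)! = (M - k + 2) * ((M - k + 1) * (M - k)!) := by
    rw [Nat.factorial_succ, Nat.factorial_succ]
  calc M.choose k * ((M + 2) * (M + 1)) * (k ! * (M - k)!)
      = (M + 2) * ((M + 1) * (M.choose k * k ! * (M - k)!)) := by ring
    _ = (M + 2) * ((M + 1) * M !) := by rw [e1]
    _ = (M + 2)! := by rw [show M + 2 = (M+1)+1 from rfl, Nat.factorial_succ, Nat.factorial_succ]
    _ = (M + 2).choose k * k ! * (M + 2 - k)! := e2.symm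
    _ = (M + 2).choose k * ((M - k + 2) * (M - k + 1)) * (k ! * (M - k)!) := by
        rw [h3, h4]; ring

lemma choose_id (n i : ℕ) (hi : i ≤ n) :
    ((2 * n).choose (2 * i) : ℝ) * ((2 * (n : ℝ) + 2) * (2 * (n : ℝ) + 1))
      = ((2 * n + 2).choose (2 * i) : ℝ) *
        ((2 * ((n - i : ℕ) : ℝ) + 2) * (2 * ((n - i : ℕ) : ℝ) + 1)) := by
  have h := nat_id (2 * n) (2 * i) (by omega)
  have h2 : 2 * n - 2 * i = 2 * (n - i) := by omega
  rw [h2] at h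
  exact_mod_cast h

lemma mydiv_helper (C1 C2 D1 D2 A B : ℝ) (hD1 : D1 ≠ 0) (hD2 : D2 ≠ 0) (hB : B ≠ 0)
    (h : C1 * D2 = C2 * D1) : C1 * (A / B / D1) = C2 * A / (B * D2) := by
  rw [div_div, ← mul_div_assoc, div_eq_div_iff (mul_ne_zero hB hD1) (mul_ne_zero hB hD2)]
  linear_combination A * B * h

lemma pell_id (n : ℕ) :
    ∑ i ∈ range (n + 1), ((2 * n).choose (2 * i) : ℝ) * paux (n - i) = 2 ^ n * paux n := by
  have h2pos : (0:ℝ) < 2 := by norm_num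
  have hs2 : Real.sqrt 2 ^ 2 = 2 := Real.sq_sqrt (by norm_num)
  have hs2pos : (0:ℝ) < Real.sqrt 2 := Real.sqrt_pos.mpr (by norm_num)
  set s2 : ℝ := Real.sqrt 2 with hs2def
  have hs2ne : s2 ≠ 0 := ne_of_gt hs2pos
  set c : ℝ := 1 + s2 with hcdef
  set d : ℝ := 1 - s2 with hddef
  have hDne : ∀ k : ℕ, ((2 * (k:ℝ) + 2) * (2 * (k:ℝ) + 1)) ≠ 0 := by
    intro k; positivity
  -- ψ : partial even binomial sums
  have hpsi : ∀ x : ℝ, ∑ i ∈ range (n + 1), ((2 * n + 2).choose (2 * i) : ℝ) * x ^ (2 * (n - i) + 2)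
      = ((x + 1) ^ (2 * n + 2) + (x - 1) ^ (2 * n + 2)) / 2 - 1 := by
    intro x
    have he := ebinom (n + 1) x
    rw [Finset.sum_range_succ] at he
    have hlast : ((2 * (n + 1)).choose (2 * (n + 1)) : ℝ) * x ^ (2 * (n + 1 - (n + 1))) = 1 := by
      simp [Nat.choose_self]
    rw [hlast] at he
    have hsum : ∑ i ∈ range (n + 1), ((2 * (n + 1)).choose (2 * i) : ℝ) * x ^ (2 * (n + 1 - i))
        = ∑ i ∈ range (n + 1), ((2 * n + 2).choose (2 * i) : ℝ) * x ^ (2 * (n - i) + 2) := by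
      refine Finset.sum_congr rfl fun i hi => ?_
      have hi' : i ≤ n := Nat.lt_succ_iff.mp (Finset.mem_range.mp hi)
      have e1 : 2 * (n + 1) = 2 * n + 2 := by ring
      have e2 : 2 * (n + 1 - i) = 2 * (n - i) + 2 := by omega
      rw [e1, e2]
    rw [hsum] at he
    have e1 : 2 * (n + 1) = 2 * n + 2 := by ring
    rw [e1] at he
    linarith
  -- termwise rewriting
  have step1 : ∀ i ∈ range (n + 1),
      ((2 * n).choose (2 * i) : ℝ) * paux (n - i)
        = ((2 * n + 2).choose (2 * i) : ℝ) * (c ^ (2 * (n - i) + 2) - d ^ (2 * (n - i) + 2)) /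
            ((2 * s2) * ((2 * (n:ℝ) + 2) * (2 * (n:ℝ) + 1))) := by
    intro i hi
    have hi' : i ≤ n := Nat.lt_succ_iff.mp (Finset.mem_range.mp hi)
    have hc := choose_id n i hi'
    unfold paux Pell
    exact mydiv_helper _ _ _ _ _ _ (hDne _) (hDne _) (by positivity) hc
  rw [Finset.sum_congr rfl step1]
  have hsplit : ∑ i ∈ range (n + 1),
      ((2 * n + 2).choose (2 * i) : ℝ) * (c ^ (2 * (n - i) + 2) - d ^ (2 * (n - i) + 2)) /
        ((2 * s2) * ((2 * (n:ℝ) + 2) * (2 * (n:ℝ) + 1)))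
      = ((∑ i ∈ range (n + 1), ((2 * n + 2).choose (2 * i) : ℝ) * c ^ (2 * (n - i) + 2))
        - (∑ i ∈ range (n + 1), ((2 * n + 2).choose (2 * i) : ℝ) * d ^ (2 * (n - i) + 2))) /
        ((2 * s2) * ((2 * (n:ℝ) + 2) * (2 * (n:ℝ) + 1))) := by
    rw [← Finset.sum_div, ← Finset.sum_sub_distrib]
    congr 1
    refine Finset.sum_congr rfl fun i _ => by ring
  rw [hsplit, hpsi c, hpsi d]
  -- evaluate the binomials
  have hcc : c + 1 = s2 * c := by
    rw [hcdef]; nlinarith [hs2]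
  have hc2 : c - 1 = s2 := by rw [hcdef]; ring
  have hdd : d + 1 = -(s2 * d) := by
    rw [hddef]; nlinarith [hs2]
  have hd2 : d - 1 = -s2 := by rw [hddef]; ring
  have hev : Even (2 * n + 2) := ⟨n + 1, by ring⟩
  have hs2pow : s2 ^ (2 * n + 2) = 2 ^ (n + 1) := by
    rw [show 2 * n + 2 = 2 * (n + 1) by ring, pow_mul, hs2]
  have h1 : (c + 1) ^ (2 * n + 2) = 2 ^ (n + 1) * c ^ (2 * n + 2) := by
    rw [hcc, mul_pow, hs2pow]
  have h2 : (c - 1) ^ (2 * n + 2) = 2 ^ (n + 1) := by rw [hc2, hs2pow]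
  have h3 : (d + 1) ^ (2 * n + 2) = 2 ^ (n + 1) * d ^ (2 * n + 2) := by
    rw [hdd, hev.neg_pow, mul_pow, hs2pow]
  have h4 : (d - 1) ^ (2 * n + 2) = 2 ^ (n + 1) := by rw [hd2, hev.neg_pow, hs2pow]
  rw [h1, h2, h3, h4]
  unfold paux Pell
  rw [show (1:ℝ) + s2 = c from rfl, show (1:ℝ) - s2 = d from rfl]
  field_simp
  ring

end AuxAlgebra

section Prob
variable {Ω : Type*} [MeasurableSpace Ω] {P : Measure Ω} [IsProbabilityMeasure P]

lemma rad_ae {Y : Ω → ℝ} (hm : Measurable Y) (h1 : P {ω | Y ω = 1} = 1/2)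
    (h2 : P {ω | Y ω = -1} = 1/2) : ∀ᵐ ω ∂P, Y ω = 1 ∨ Y ω = -1 := by
  have hA : MeasurableSet {ω | Y ω = 1} := hm (measurableSet_singleton 1)
  have hB : MeasurableSet {ω | Y ω = -1} := hm (measurableSet_singleton (-1))
  have hdisj : Disjoint {ω | Y ω = 1} {ω | Y ω = -1} := by
    rw [Set.disjoint_left]
    rintro ω hω1 hω2
    simp only [Set.mem_setOf_eq] at hω1 hω2
    rw [hω1] at hω2; norm_num at hω2
  have hu : P ({ω | Y ω = 1} ∪ {ω | Y ω = -1}) = 1 := by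
    rw [measure_union hdisj hB, h1, h2, ENNReal.add_halves]
  have hcompl : P ({ω | Y ω = 1} ∪ {ω | Y ω = -1})ᶜ = 0 := by
    rw [measure_compl (hA.union hB) (measure_ne_top _ _), hu, measure_univ, tsub_self]
  have hset : {ω | ¬(Y ω = 1 ∨ Y ω = -1)} = ({ω | Y ω = 1} ∪ {ω | Y ω = -1})ᶜ := by
    ext ω; simp [not_or]
  rw [ae_iff, hset]
  exact hcompl

lemma integrable_of_abs_bound {f : Ω → ℝ} {C : ℝ} (hf : AEStronglyMeasurable f P)
    (h : ∀ᵐ ω ∂P, |f ω| ≤ C) : Integrable f P :=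
  (integrable_const C).mono' hf (by simpa [Real.norm_eq_abs] using h)

lemma rad_moment {Y : Ω → ℝ} (hm : Measurable Y) (h1 : P {ω | Y ω = 1} = 1/2)
    (h2 : P {ω | Y ω = -1} = 1/2) (a : ℕ) :
    ∫ ω, (Y ω) ^ a ∂P = if Even a then 1 else 0 := by
  have hA : MeasurableSet {ω | Y ω = 1} := hm (measurableSet_singleton 1)
  have hB : MeasurableSet {ω | Y ω = -1} := hm (measurableSet_singleton (-1))
  have hae := rad_ae hm h1 h2
  have key : (fun ω => (Y ω) ^ a) =ᵐ[P]
      fun ω => Set.indicator {ω | Y ω = 1} (fun _ => (1:ℝ)) ω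
        + Set.indicator {ω | Y ω = -1} (fun _ => (-1:ℝ) ^ a) ω := by
    filter_upwards [hae] with ω hω
    rcases hω with h | h
    · norm_num [Set.indicator_apply, h]
    · norm_num [Set.indicator_apply, h]
  have htoReal : ((1:ℝ≥0∞)/2).toReal = 1/2 := by
    rw [ENNReal.toReal_div]; simp
  rw [integral_congr_ae key, integral_add ((integrable_const _).indicator hA)
    ((integrable_const _).indicator hB), integral_indicator_const _ hA,
    integral_indicator_const _ hB, measureReal_def, measureReal_def, h1, h2, htoReal]
  rcases Nat.even_or_odd a with he | ho
  · rw [if_pos he, he.neg_one_pow]; norm_num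
  · rw [if_neg (Nat.not_even_iff_odd.mpr ho), ho.neg_one_pow]; norm_num

lemma prod_moment {Y : ℕ → Ω → ℝ} (hm : ∀ k, Measurable (Y k))
    (hindep : iIndepFun Y P)
    (h1 : ∀ k, P {ω | Y k ω = 1} = 1/2) (h2 : ∀ k, P {ω | Y k ω = -1} = 1/2)
    (g : ℕ → ℝ) (kk : ℕ → ℕ) (s : Finset ℕ) :
    Integrable (fun ω => ∏ i ∈ s, (g i * Y i ω) ^ kk i) P ∧
    ∫ ω, ∏ i ∈ s, (g i * Y i ω) ^ kk i ∂P
      = ∏ i ∈ s, (g i ^ kk i * (if Even (kk i) then 1 else 0)) := by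
  set F : ℕ → Ω → ℝ := fun i ω => (g i * Y i ω) ^ kk i with hF
  have hFmeas : ∀ i, Measurable (F i) := fun i => (measurable_const.mul (hm i)).pow_const _
  have hFindep : iIndepFun F P :=
    hindep.comp (fun i x => (g i * x) ^ kk i)
      (fun i => (measurable_const.mul measurable_id).pow_const _)
  have habs : ∀ i, ∀ᵐ ω ∂P, |F i ω| = |g i| ^ kk i := by
    intro i
    filter_upwards [rad_ae (hm i) (h1 i) (h2 i)] with ω hω
    have : |Y i ω| = 1 := by rcases hω with h | h <;> rw [h] <;> norm_num
    rw [hF]; simp only [abs_pow, abs_mul, this, mul_one]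
  have hFint : ∀ i, Integrable (F i) P := fun i =>
    integrable_of_abs_bound (hFmeas i).aestronglyMeasurable
      ((habs i).mono fun ω h => le_of_eq h)
  have hEF : ∀ i, ∫ ω, F i ω ∂P = g i ^ kk i * (if Even (kk i) then 1 else 0) := by
    intro i
    have : ∀ ω, F i ω = g i ^ kk i * (Y i ω) ^ kk i := by
      intro ω; rw [hF]; simp [mul_pow]
    rw [integral_congr_ae (Filter.Eventually.of_forall this), integral_const_mul,
      rad_moment (hm i) (h1 i) (h2 i)]
  classical
  induction s using Finset.induction_on with
  | empty => constructor
             · simpa using integrable_const (1:ℝ)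
             · simp
  | insert a s ha ih =>
    obtain ⟨ih_int, ih_eq⟩ := ih
    have hprodmeas : Measurable (fun ω => ∏ i ∈ s, F i ω) :=
      Finset.measurable_prod s (fun i _ => hFmeas i)
    have hIndep : IndepFun (fun ω => ∏ i ∈ s, F i ω) (F a) P := by
      have h := hFindep.indepFun_finset_prod_of_notMem hFmeas ha
      have e : (∏ j ∈ s, F j) = fun ω => ∏ j ∈ s, F j ω := by
        funext ω; exact Finset.prod_apply ω s F
      rwa [e] at h
    constructor
    · simp only [Finset.prod_insert ha]
      have := hIndep.symm.integrable_mul (hFint a) ih_int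
      have e : ((F a) * fun ω => ∏ i ∈ s, F i ω) = fun ω => F a ω * ∏ i ∈ s, F i ω := rfl
      rwa [e] at this
    · simp only [Finset.prod_insert ha]
      have h := hIndep.symm.integral_mul_eq_mul_integral (hFint a).aestronglyMeasurable ih_int.aestronglyMeasurable
      have e : ((F a) * fun ω => ∏ i ∈ s, F i ω) = fun ω => F a ω * ∏ i ∈ s, F i ω := rfl
      rw [e] at h
      rw [h, ih_eq, hEF a]

end Prob

section Prob2
variable {Ω : Type*} [MeasurableSpace Ω] {P : Measure Ω} [IsProbabilityMeasure P]

lemma moment_formula {Y : ℕ → Ω → ℝ} (hm : ∀ k, Measurable (Y k))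
    (hindep : iIndepFun Y P)
    (h1 : ∀ k, P {ω | Y k ω = 1} = 1/2) (h2 : ∀ k, P {ω | Y k ω = -1} = 1/2)
    (g : ℕ → ℝ) (N j : ℕ) :
    ∫ ω, (∑ i ∈ range N, g i * Y i ω) ^ j ∂P
      = ∑ k ∈ Finset.piAntidiag (range N) j, (Nat.multinomial (range N) k : ℝ) *
          ∏ i ∈ range N, (g i ^ k i * (if Even (k i) then 1 else 0)) := by
  have expand : ∀ ω, (∑ i ∈ range N, g i * Y i ω) ^ j
      = ∑ k ∈ Finset.piAntidiag (range N) j, (Nat.multinomial (range N) k : ℝ) *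
          ∏ i ∈ range N, (g i * Y i ω) ^ k i :=
    fun ω => Finset.sum_pow_eq_sum_piAntidiag (range N) _ j
  rw [integral_congr_ae (Filter.Eventually.of_forall expand), integral_finset_sum _
    (fun k _ => ((prod_moment hm hindep h1 h2 g k (range N)).1).const_mul _)]
  refine Finset.sum_congr rfl fun k _ => ?_
  rw [integral_const_mul, (prod_moment hm hindep h1 h2 g k (range N)).2]

lemma shift_indep {Y : ℕ → Ω → ℝ} (hindep : iIndepFun Y P) :
    iIndepFun (fun i => Y (i + 1)) P := by
  rw [iIndepFun_iff_measure_inter_preimage_eq_mul] at hindep ⊢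
  intro S sets hsets
  have key := hindep (S.map ⟨Nat.succ, Nat.succ_injective⟩) (sets := fun j => sets (j - 1))
    (fun j hj => by
      obtain ⟨i, hi, rfl⟩ := Finset.mem_map.mp hj
      exact hsets i hi)
  have e1 : ⋂ j ∈ S.map ⟨Nat.succ, Nat.succ_injective⟩, Y j ⁻¹' sets (j - 1)
      = ⋂ i ∈ S, Y (i + 1) ⁻¹' sets i := by
    ext x
    simp only [Set.mem_iInter, Finset.mem_map, Function.Embedding.coeFn_mk]
    constructor
    · intro h i hi
      have := h (i + 1) ⟨i, hi, rfl⟩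
      simpa using this
    · rintro h j ⟨i, hi, rfl⟩
      simpa using h i hi
  have e2 : ∏ j ∈ S.map ⟨Nat.succ, Nat.succ_injective⟩, P (Y j ⁻¹' sets (j - 1))
      = ∏ i ∈ S, P (Y (i + 1) ⁻¹' sets i) := by
    rw [Finset.prod_map]
    exact Finset.prod_congr rfl fun i _ => by simp
  rw [e1, e2] at key
  exact key

end Prob2

/-- `m_(2n)(√2) = P_(2n+2) / ((2n+2)(2n+1))`. -/
theorem stmt_16 {Ω : Type*} [MeasurableSpace Ω] (P : Measure Ω) [IsProbabilityMeasure P]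
    (X : ℕ → Ω → ℝ) (hmeas : ∀ n, Measurable (X n))
    (hindep : iIndepFun X P)
    (h1 : ∀ n, P {ω | X n ω = 1} = 1 / 2) (h2 : ∀ n, P {ω | X n ω = -1} = 1 / 2)
    (S : ℝ → Ω → ℝ)
    (hS : ∀ l : ℝ, 1 < l → ∀ ω, S l ω = ∑' n : ℕ, l ^ (-(n + 1 : ℤ)) * X n ω)
    (m : ℝ → ℕ → ℝ) (hm : ∀ l k, m l k = ∫ ω, (S l ω) ^ k ∂P)
    (n : ℕ) :
    m (Real.sqrt 2) (2 * n) = Pell (2 * n + 2) / ((2 * (n : ℝ) + 2) * (2 * (n : ℝ) + 1)) := by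
  suffices H : ∀ n, m (Real.sqrt 2) (2 * n) = paux n by
    have := H n; rw [paux] at this; exact this
  clear n
  -- basic facts about l = √2
  have hl : (1:ℝ) < Real.sqrt 2 := by
    have h := Real.sqrt_lt_sqrt (by norm_num : (0:ℝ) ≤ 1) (by norm_num : (1:ℝ) < 2)
    simpa using h
  set l : ℝ := Real.sqrt 2 with hldef
  have hl0 : (0:ℝ) < l := lt_trans one_pos hl
  have hlne : l ≠ 0 := ne_of_gt hl0
  have hsq : l ^ 2 = 2 := Real.sq_sqrt (by norm_num)
  have hinv1 : l⁻¹ < 1 := inv_lt_one_of_one_lt₀ hl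
  have hinv0 : (0:ℝ) < l⁻¹ := inv_pos.mpr hl0
  -- coefficients
  set c : ℕ → ℝ := fun k => l⁻¹ ^ (k + 1) with hcdef
  have hcpos : ∀ k, 0 < c k := fun k => pow_pos hinv0 _
  have hcsum : Summable c := by
    have := (summable_geometric_of_lt_one (le_of_lt hinv0) hinv1).mul_right l⁻¹
    refine this.congr fun k => ?_
    rw [hcdef]; simp [pow_succ]
  set B : ℝ := ∑' k, c k with hBdef
  have hB0 : 0 ≤ B := tsum_nonneg fun k => (hcpos k).le
  -- rewrite S
  have hcoef : ∀ k : ℕ, l ^ (-(k + 1 : ℤ)) = c k := by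
    intro k
    show _ = l⁻¹ ^ (k + 1)
    rw [show (-(k + 1 : ℤ)) = -((k + 1 : ℕ) : ℤ) by push_cast; ring, zpow_neg, zpow_natCast,
      inv_pow]
  have hSeq : ∀ ω, S l ω = ∑' k : ℕ, c k * X k ω := by
    intro ω
    rw [hS l hl ω]
    exact tsum_congr fun k => by rw [hcoef k]
  -- the good event
  have hG : ∀ᵐ ω ∂P, ∀ k, X k ω = 1 ∨ X k ω = -1 :=
    ae_all_iff.mpr fun k => rad_ae (hmeas k) (h1 k) (h2 k)
  -- partial sums
  set SN : ℕ → Ω → ℝ := fun N ω => ∑ i ∈ range N, c i * X i ω with hSNdef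
  set TN : ℕ → Ω → ℝ := fun N ω => ∑ i ∈ range N, c i * X (i + 1) ω with hTNdef
  set T : Ω → ℝ := fun ω => l * S l ω - X 0 ω with hTdef
  -- pointwise facts on the good event
  have hgood : ∀ ω, (∀ k, X k ω = 1 ∨ X k ω = -1) →
      HasSum (fun k => c k * X k ω) (S l ω) ∧ HasSum (fun k => c k * X (k + 1) ω) (T ω) := by
    intro ω hω
    have habs1 : ∀ k, |X k ω| = 1 := by
      intro k; rcases hω k with h | h <;> rw [h] <;> norm_num
    have hsummable : Summable (fun k => c k * X k ω) := by
      refine Summable.of_norm (hcsum.congr fun k => ?_)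
      rw [Real.norm_eq_abs, abs_mul, habs1, mul_one, abs_of_pos (hcpos k)]
    have hs1 : HasSum (fun k => c k * X k ω) (S l ω) := by
      rw [hSeq ω]; exact hsummable.hasSum
    refine ⟨hs1, ?_⟩
    have hs2' : HasSum (fun k => l⁻¹ ^ k * X k ω) (l * S l ω) := by
      have h := hs1.mul_left l
      have e : (fun k => l * (c k * X k ω)) = fun k => l⁻¹ ^ k * X k ω := by
        funext k
        rw [hcdef]
        simp only [pow_succ]
        rw [mul_comm (l⁻¹ ^ k) l⁻¹, ← mul_assoc, ← mul_assoc, mul_inv_cancel₀ hlne, one_mul]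
      rwa [e] at h
    have e0 : l * S l ω = T ω + ∑ i ∈ range 1, l⁻¹ ^ i * X i ω := by
      rw [hTdef]; simp [Finset.sum_range_one]
    rw [e0] at hs2'
    have h := (hasSum_nat_add_iff (f := fun k => l⁻¹ ^ k * X k ω) 1).mpr hs2'
    exact h
  -- a.e. facts
  have hae_facts : ∀ᵐ ω ∂P, (Filter.Tendsto (fun N => SN N ω) Filter.atTop (nhds (S l ω))) ∧
      (Filter.Tendsto (fun N => TN N ω) Filter.atTop (nhds (T ω))) ∧
      (∀ N, |SN N ω| ≤ B) ∧ (∀ N, |TN N ω| ≤ B) ∧ |S l ω| ≤ B ∧ |T ω| ≤ B ∧ |X 0 ω| = 1 := by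
    filter_upwards [hG] with ω hω
    obtain ⟨hs1, hs2⟩ := hgood ω hω
    have habs1 : ∀ k, |X k ω| = 1 := by
      intro k; rcases hω k with h | h <;> rw [h] <;> norm_num
    have hbnd : ∀ (N : ℕ) (f : ℕ → ℕ), |∑ i ∈ range N, c i * X (f i) ω| ≤ B := by
      intro N f
      calc |∑ i ∈ range N, c i * X (f i) ω| ≤ ∑ i ∈ range N, |c i * X (f i) ω| :=
            Finset.abs_sum_le_sum_abs _ _
        _ = ∑ i ∈ range N, c i := Finset.sum_congr rfl fun i _ => by
            rw [abs_mul, habs1, mul_one, abs_of_pos (hcpos i)]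
        _ ≤ B := Summable.sum_le_tsum (range N) (fun i _ => (hcpos i).le) hcsum
    have htsumbnd : ∀ (g : ℕ → ℝ) (a : ℝ), HasSum g a → (∀ k, |g k| = c k) → |a| ≤ B := by
      intro g a hg hgc
      have hsg : Summable fun k => ‖g k‖ := by
        refine hcsum.congr fun k => ?_
        rw [Real.norm_eq_abs, hgc]
      have := norm_tsum_le_tsum_norm hsg
      rw [hg.tsum_eq] at this
      calc |a| = ‖a‖ := rfl
        _ ≤ ∑' k, ‖g k‖ := this
        _ = B := by rw [hBdef]; exact tsum_congr fun k => by rw [Real.norm_eq_abs, hgc]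
    refine ⟨hs1.tendsto_sum_nat, hs2.tendsto_sum_nat, fun N => hbnd N id, fun N => hbnd N (· + 1),
      ?_, ?_, habs1 0⟩
    · exact htsumbnd _ _ hs1 fun k => by rw [abs_mul, habs1, mul_one, abs_of_pos (hcpos k)]
    · exact htsumbnd _ _ hs2 fun k => by rw [abs_mul, habs1, mul_one, abs_of_pos (hcpos k)]
  -- measurability
  have hSNmeas : ∀ N, Measurable (SN N) := fun N =>
    Finset.measurable_sum _ fun i _ => (hmeas i).const_mul _
  have hTNmeas : ∀ N, Measurable (TN N) := fun N =>
    Finset.measurable_sum _ fun i _ => (hmeas (i + 1)).const_mul _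
  have hS_aesm : AEStronglyMeasurable (S l) P :=
    aestronglyMeasurable_of_tendsto_ae Filter.atTop
      (fun N => (hSNmeas N).aestronglyMeasurable) (hae_facts.mono fun ω h => h.1)
  have hT_aesm : AEStronglyMeasurable T P := by
    rw [hTdef]
    exact (hS_aesm.const_mul l).sub (hmeas 0).aestronglyMeasurable
  -- integrability
  have hint_S : ∀ j, Integrable (fun ω => (S l ω) ^ j) P := by
    intro j
    refine integrable_of_abs_bound (C := B ^ j) (hS_aesm.pow _) ?_
    filter_upwards [hae_facts] with ω h
    rw [abs_pow]
    exact pow_le_pow_left₀ (abs_nonneg _) h.2.2.2.2.1 j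
  have hint_T : ∀ j, Integrable (fun ω => (T ω) ^ j) P := by
    intro j
    refine integrable_of_abs_bound (C := B ^ j) (hT_aesm.pow _) ?_
    filter_upwards [hae_facts] with ω h
    rw [abs_pow]
    exact pow_le_pow_left₀ (abs_nonneg _) h.2.2.2.2.2.1 j
  have hint_mix : ∀ j mm, Integrable (fun ω => (X 0 ω) ^ j * (T ω) ^ mm) P := by
    intro j mm
    refine integrable_of_abs_bound (C := B ^ mm)
      ((((hmeas 0).pow_const j).aestronglyMeasurable).mul (hT_aesm.pow _)) ?_
    filter_upwards [hae_facts] with ω h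
    rw [abs_mul, abs_pow, abs_pow, h.2.2.2.2.2.2, one_pow, one_mul]
    exact pow_le_pow_left₀ (abs_nonneg _) h.2.2.2.2.2.1 mm
  have hint_TN : ∀ N j, Integrable (fun ω => (TN N ω) ^ j) P := by
    intro N j
    refine integrable_of_abs_bound (C := B ^ j) (((hTNmeas N).pow_const j).aestronglyMeasurable) ?_
    filter_upwards [hae_facts] with ω h
    rw [abs_pow]
    exact pow_le_pow_left₀ (abs_nonneg _) (h.2.2.2.1 N) j
  have hint_X0 : ∀ j, Integrable (fun ω => (X 0 ω) ^ j) P := by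
    intro j
    refine integrable_of_abs_bound (C := 1) (((hmeas 0).pow_const j).aestronglyMeasurable) ?_
    filter_upwards [hae_facts] with ω h
    rw [abs_pow, h.2.2.2.2.2.2, one_pow]
  -- limits
  have hLS : ∀ j, Filter.Tendsto (fun N => ∫ ω, (SN N ω) ^ j ∂P) Filter.atTop
      (nhds (∫ ω, (S l ω) ^ j ∂P)) := by
    intro j
    refine tendsto_integral_of_dominated_convergence (fun _ => B ^ j)
      (fun N => ((hSNmeas N).pow_const j).aestronglyMeasurable) (integrable_const _) ?_ ?_
    · intro N
      filter_upwards [hae_facts] with ω h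
      rw [Real.norm_eq_abs, abs_pow]
      exact pow_le_pow_left₀ (abs_nonneg _) (h.2.2.1 N) j
    · filter_upwards [hae_facts] with ω h
      exact h.1.pow j
  have hLT : ∀ j, Filter.Tendsto (fun N => ∫ ω, (TN N ω) ^ j ∂P) Filter.atTop
      (nhds (∫ ω, (T ω) ^ j ∂P)) := by
    intro j
    refine tendsto_integral_of_dominated_convergence (fun _ => B ^ j)
      (fun N => ((hTNmeas N).pow_const j).aestronglyMeasurable) (integrable_const _) ?_ ?_
    · intro N
      filter_upwards [hae_facts] with ω h
      rw [Real.norm_eq_abs, abs_pow]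
      exact pow_le_pow_left₀ (abs_nonneg _) (h.2.2.2.1 N) j
    · filter_upwards [hae_facts] with ω h
      exact h.2.1.pow j
  have hLmix : ∀ j mm, Filter.Tendsto (fun N => ∫ ω, (X 0 ω) ^ j * (TN N ω) ^ mm ∂P)
      Filter.atTop (nhds (∫ ω, (X 0 ω) ^ j * (T ω) ^ mm ∂P)) := by
    intro j mm
    refine tendsto_integral_of_dominated_convergence (fun _ => B ^ mm)
      (fun N => (((hmeas 0).pow_const j).aestronglyMeasurable).mul
        (((hTNmeas N).pow_const mm).aestronglyMeasurable)) (integrable_const _) ?_ ?_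
    · intro N
      filter_upwards [hae_facts] with ω h
      rw [Real.norm_eq_abs, abs_mul, abs_pow, abs_pow, h.2.2.2.2.2.2, one_pow, one_mul]
      exact pow_le_pow_left₀ (abs_nonneg _) (h.2.2.2.1 N) mm
    · filter_upwards [hae_facts] with ω h
      exact Filter.Tendsto.const_mul _ (h.2.1.pow mm)
  -- finite moments agree
  have hEqNT : ∀ N j, ∫ ω, (TN N ω) ^ j ∂P = ∫ ω, (SN N ω) ^ j ∂P := by
    intro N j
    have hA := moment_formula (P := P) (Y := fun i => X (i + 1)) (fun k => hmeas (k + 1))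
      (shift_indep hindep) (fun k => h1 (k + 1)) (fun k => h2 (k + 1)) c N j
    have hB' := moment_formula (P := P) (Y := X) hmeas hindep h1 h2 c N j
    rw [hTNdef, hSNdef]
    rw [hA, hB']
  have hTm : ∀ j, ∫ ω, (T ω) ^ j ∂P = m l j := by
    intro j
    have h2' := hLT j
    have he : (fun N => ∫ ω, (TN N ω) ^ j ∂P) = fun N => ∫ ω, (SN N ω) ^ j ∂P :=
      funext fun N => hEqNT N j
    rw [he] at h2'
    rw [hm]
    exact tendsto_nhds_unique h2' (hLS j)
  -- finite mixed moments
  have hfinmix : ∀ N j mm, ∫ ω, (X 0 ω) ^ j * (TN N ω) ^ mm ∂P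
      = (if Even j then 1 else 0) * ∫ ω, (TN N ω) ^ mm ∂P := by
    intro N j mm
    set W : ℕ → Ω → ℝ := fun i ω => (if i = 0 then 1 else c (i - 1)) * X i ω with hWdef
    have hWmeas : ∀ i, Measurable (W i) := fun i => (hmeas i).const_mul _
    have hWindep : iIndepFun W P :=
      hindep.comp (fun i x => (if i = 0 then 1 else c (i - 1)) * x)
        (fun i => measurable_id.const_mul _)
    have hmapIcc : (range N).map ⟨Nat.succ, Nat.succ_injective⟩ = Finset.Icc 1 N := by
      ext x
      simp only [Finset.mem_map, Finset.mem_range, Finset.mem_Icc,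
        Function.Embedding.coeFn_mk]
      constructor
      · rintro ⟨i, hi, rfl⟩; omega
      · intro hx; exact ⟨x - 1, by omega, by omega⟩
    have hTNW : ∀ ω, TN N ω = ∑ i ∈ Finset.Icc 1 N, W i ω := by
      intro ω
      rw [← hmapIcc, Finset.sum_map]
      refine Finset.sum_congr rfl fun i _ => ?_
      simp only [Function.Embedding.coeFn_mk, hWdef, Nat.succ_eq_add_one]
      rw [if_neg (by omega), Nat.add_sub_cancel]
    have h0 : (0:ℕ) ∉ Finset.Icc 1 N := by simp
    have hIndep0 : IndepFun (∑ i ∈ Finset.Icc 1 N, W i) (W 0) P :=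
      hWindep.indepFun_finset_sum_of_notMem hWmeas h0
    have hIndPow := hIndep0.comp
      (measurable_id.pow_const mm : Measurable fun x : ℝ => x ^ mm)
      (measurable_id.pow_const j : Measurable fun x : ℝ => x ^ j)
    have e1 : ((fun x : ℝ => x ^ mm) ∘ (∑ i ∈ Finset.Icc 1 N, W i))
        = fun ω => (TN N ω) ^ mm := by
      funext ω
      simp only [Function.comp_apply, Finset.sum_apply]
      rw [← hTNW ω]
    have e2 : ((fun x : ℝ => x ^ j) ∘ (W 0)) = fun ω => (X 0 ω) ^ j := by
      funext ω
      simp [hWdef]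
    simp only [id_eq] at hIndPow
    rw [e1, e2] at hIndPow
    have hmul := IndepFun.integral_mul_eq_mul_integral (IndepFun.symm hIndPow) (hint_X0 j).aestronglyMeasurable (hint_TN N mm).aestronglyMeasurable
    have e3 : ((fun ω => (X 0 ω) ^ j) * fun ω => (TN N ω) ^ mm)
        = fun ω => (X 0 ω) ^ j * (TN N ω) ^ mm := rfl
    rw [e3] at hmul
    rw [hmul, rad_moment (hmeas 0) (h1 0) (h2 0) j]
  -- mixed moments in the limit
  have hMix : ∀ j mm, ∫ ω, (X 0 ω) ^ j * (T ω) ^ mm ∂P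
      = (if Even j then 1 else 0) * m l mm := by
    intro j mm
    have h1' := hLmix j mm
    have h2' : Filter.Tendsto (fun N => ∫ ω, (X 0 ω) ^ j * (TN N ω) ^ mm ∂P) Filter.atTop
        (nhds ((if Even j then 1 else 0) * m l mm)) := by
      have he : (fun N => ∫ ω, (X 0 ω) ^ j * (TN N ω) ^ mm ∂P)
          = fun N => (if Even j then 1 else 0) * ∫ ω, (TN N ω) ^ mm ∂P :=
        funext fun N => hfinmix N j mm
      rw [he]
      have := (hLT mm).const_mul (if Even j then (1:ℝ) else 0)
      rwa [hTm mm] at this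
    exact tendsto_nhds_unique h1' h2'
  -- the recursion
  have hrec : ∀ q : ℕ, (2:ℝ) ^ q * m l (2 * q)
      = ∑ i ∈ range (q + 1), ((2 * q).choose (2 * i) : ℝ) * m l (2 * (q - i)) := by
    intro q
    have hpow : ∀ ω, (2:ℝ) ^ q * (S l ω) ^ (2 * q) = (X 0 ω + T ω) ^ (2 * q) := by
      intro ω
      have hXT : X 0 ω + T ω = l * S l ω := by rw [hTdef]; ring
      rw [hXT]
      conv_rhs => rw [mul_pow, pow_mul, hsq]
    calc (2:ℝ) ^ q * m l (2 * q) = ∫ ω, (2:ℝ) ^ q * (S l ω) ^ (2 * q) ∂P := by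
          rw [hm, integral_const_mul]
      _ = ∫ ω, (X 0 ω + T ω) ^ (2 * q) ∂P :=
          integral_congr_ae (Filter.Eventually.of_forall hpow)
      _ = ∫ ω, ∑ j ∈ range (2 * q + 1),
            (X 0 ω) ^ j * (T ω) ^ (2 * q - j) * ((2 * q).choose j : ℝ) ∂P := by
          refine integral_congr_ae (Filter.Eventually.of_forall fun ω => ?_)
          show (X 0 ω + T ω) ^ (2 * q) = _
          rw [add_pow]
      _ = ∑ j ∈ range (2 * q + 1),
            ((2 * q).choose j : ℝ) * ((if Even j then 1 else 0) * m l (2 * q - j)) := by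
          rw [integral_finset_sum _ (fun j _ => (hint_mix j (2 * q - j)).mul_const _)]
          refine Finset.sum_congr rfl fun j _ => ?_
          rw [integral_mul_const, hMix j (2 * q - j)]
          ring
      _ = ∑ i ∈ range (q + 1),
            ((2 * q).choose (2 * i) : ℝ) * ((if Even (2 * i) then 1 else 0) * m l (2 * q - 2 * i)) := by
          refine sum_even q _ fun j hj => ?_
          rw [if_neg (Nat.not_even_iff_odd.mpr hj)]
          ring
      _ = ∑ i ∈ range (q + 1), ((2 * q).choose (2 * i) : ℝ) * m l (2 * (q - i)) := by
          refine Finset.sum_congr rfl fun i hi => ?_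
          have hi' : i ≤ q := Nat.lt_succ_iff.mp (Finset.mem_range.mp hi)
          rw [if_pos ⟨i, two_mul i⟩, one_mul, show 2 * q - 2 * i = 2 * (q - i) by omega]
  -- m l 0 = 1
  have hm0 : m l 0 = 1 := by
    rw [hm]
    simp
  have hpaux0 : paux 0 = 1 := by
    unfold paux Pell
    rw [show ((1 + Real.sqrt 2) ^ (2 * 0 + 2) - (1 - Real.sqrt 2) ^ (2 * 0 + 2))
        = 4 * Real.sqrt 2 by ring]
    rw [show (2 * ((0:ℕ):ℝ) + 2) * (2 * ((0:ℕ):ℝ) + 1) = 2 by norm_num]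
    rw [div_div]
    rw [div_eq_one_iff_eq (by positivity)]
    ring
  -- strong induction
  intro q
  induction q using Nat.strong_induction_on with
  | _ q ih =>
    rcases Nat.eq_zero_or_pos q with rfl | hq
    · rw [show 2 * 0 = 0 from rfl, hm0, hpaux0]
    · have hr := hrec q
      have hp := pell_id q
      rw [Finset.sum_range_succ'] at hr hp
      have hsub : ∀ i ∈ range q, ((2 * q).choose (2 * (i + 1)) : ℝ) * m l (2 * (q - (i + 1)))
          = ((2 * q).choose (2 * (i + 1)) : ℝ) * paux (q - (i + 1)) := by
        intro i hi
        have : q - (i + 1) < q := by omega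
        rw [ih _ this]
      rw [Finset.sum_congr rfl hsub] at hr
      have hch0 : ((2 * q).choose (2 * 0) : ℝ) = 1 := by norm_num
      rw [hch0] at hr hp
      have hq0 : q - 0 = q := by omega
      rw [hq0] at hr hp
      have h2q : (1:ℝ) < 2 ^ q := one_lt_pow₀ (by norm_num) (by omega)
      have hne : (2:ℝ) ^ q - 1 ≠ 0 := sub_ne_zero.mpr (ne_of_gt h2q)
      have : ((2:ℝ) ^ q - 1) * m l (2 * q) = ((2:ℝ) ^ q - 1) * paux q := by
        rw [one_mul] at hr hp
        nlinarith [hr, hp]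
      exact mul_left_cancel₀ hne this
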